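/- Let c ∈ ℝ^d_{>0} and for each V > 0 let Γ^V ⊂ ℤ^d_{≥0} be a nonempty set. Define Z^V = Σ_{x ∈ Γ^V} Π_{i=1}^d e^{−Vc_i}(Vc_i)^{x_i}/(x_i!). Then Z^V ≤ 1; moreover if there is a sequence ỹ^V ∈ (1/V)Γ^V with ỹ^V → c as V → ∞, then (1/V)·ln(Z^V) → 0. -/

import Mathlib

open Filter Real

private lemma pois_sum_le_one {lam : ℝ} (hlam : 0 ≤ lam) (T : Finset ℕ) :
    ∑ k ∈ T, Real.exp (-lam) * lam ^ k / (Nat.factorial k : ℝ) ≤ 1 := by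
  have h1 : ∑ k ∈ T, Real.exp (-lam) * lam ^ k / (Nat.factorial k : ℝ)
      = Real.exp (-lam) * ∑ k ∈ T, lam ^ k / (Nat.factorial k : ℝ) := by
    rw [Finset.mul_sum]
    exact Finset.sum_congr rfl fun k _ => by ring
  have hsub : T ⊆ Finset.range (T.sup id + 1) := by
    intro k hk
    simp only [Finset.mem_range]
    exact Nat.lt_succ_of_le (Finset.le_sup (f := id) hk)
  have h2 : ∑ k ∈ T, lam ^ k / (Nat.factorial k : ℝ) ≤ Real.exp lam := by
    calc ∑ k ∈ T, lam ^ k / (Nat.factorial k : ℝ)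
        ≤ ∑ k ∈ Finset.range (T.sup id + 1), lam ^ k / (Nat.factorial k : ℝ) :=
          Finset.sum_le_sum_of_subset_of_nonneg hsub (fun k _ _ => by positivity)
      _ ≤ Real.exp lam := Real.sum_le_exp_of_nonneg hlam _
  rw [h1]
  calc Real.exp (-lam) * ∑ k ∈ T, lam ^ k / (Nat.factorial k : ℝ)
      ≤ Real.exp (-lam) * Real.exp lam := by
        exact mul_le_mul_of_nonneg_left h2 (Real.exp_nonneg _)
    _ = 1 := by rw [← Real.exp_add]; simp

private lemma finsum_prod_le_one {d : ℕ} (f : Fin d → ℕ → ℝ) (hf : ∀ i k, 0 ≤ f i k)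
    (h1 : ∀ i (T : Finset ℕ), ∑ k ∈ T, f i k ≤ 1) (S : Finset (Fin d → ℕ)) :
    ∑ x ∈ S, ∏ i, f i (x i) ≤ 1 := by
  classical
  set t : Fin d → Finset ℕ := fun i => S.image (fun x => x i) with ht
  have hsub : S ⊆ Fintype.piFinset t := by
    intro x hx
    rw [Fintype.mem_piFinset]
    intro i
    exact Finset.mem_image_of_mem _ hx
  calc ∑ x ∈ S, ∏ i, f i (x i)
      ≤ ∑ x ∈ Fintype.piFinset t, ∏ i, f i (x i) :=
        Finset.sum_le_sum_of_subset_of_nonneg hsub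
          (fun x _ _ => Finset.prod_nonneg fun i _ => hf i (x i))
    _ = ∏ i, ∑ k ∈ t i, f i k := (Finset.prod_univ_sum t f).symm
    _ ≤ 1 := Finset.prod_le_one
        (fun i _ => Finset.sum_nonneg fun k _ => hf i k)
        (fun i _ => h1 i (t i))

/-- The normalizing constant `Z^V` of the product-form stationary distribution restricted to
`Γ^V` satisfies `Z^V ≤ 1`; moreover `(1/V) ln Z^V → 0` provided there are points of
`(1/V)Γ^V` approaching the complex balanced equilibrium `c`. -/
theorem stmt_5 (d : ℕ) (c : Fin d → ℝ) (hc : ∀ i, 0 < c i)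
    (V : ℕ → ℝ) (hV : Tendsto V atTop atTop) (hVpos : ∀ n, 0 < V n)
    (Γ : ℕ → Set (Fin d → ℕ)) (hΓ : ∀ n, (Γ n).Nonempty)
    (Z : ℕ → ℝ)
    (hZ : ∀ n, Z n = ∑' x : Γ n,
      ∏ i, Real.exp (-(V n * c i)) * (V n * c i) ^ ((x : Fin d → ℕ) i) /
        (Nat.factorial ((x : Fin d → ℕ) i))) :
    (∀ n, Z n ≤ 1) ∧
      ((∃ y : ℕ → Fin d → ℕ, (∀ n, y n ∈ Γ n) ∧
          ∀ i, Tendsto (fun n => (y n i : ℝ) / V n) atTop (nhds (c i))) →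
        Tendsto (fun n => (1 / V n) * Real.log (Z n)) atTop (nhds 0)) := by
  classical
  -- basic positivity facts
  have hlam : ∀ n i, 0 < V n * c i := fun n i => mul_pos (hVpos n) (hc i)
  -- the generic term function
  set F : ℕ → (Fin d → ℕ) → ℝ := fun n x =>
    ∏ i, Real.exp (-(V n * c i)) * (V n * c i) ^ (x i) / (Nat.factorial (x i) : ℝ) with hF
  have hFpos : ∀ n x, 0 < F n x := by
    intro n x
    apply Finset.prod_pos
    intro i _
    have := hlam n i
    positivity
  -- finset sums of F are bounded by 1
  have hFsum : ∀ n (S : Finset (Fin d → ℕ)), ∑ x ∈ S, F n x ≤ 1 := by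
    intro n S
    exact finsum_prod_le_one _
      (fun i k => by have := hlam n i; positivity)
      (fun i T => pois_sum_le_one (hlam n i).le T) S
  -- sums over finsets of the subtype are bounded by 1
  have hsubsum : ∀ n (u : Finset (Γ n)), ∑ x ∈ u, F n (x : Fin d → ℕ) ≤ 1 := by
    intro n u
    have : ∑ x ∈ u, F n (x : Fin d → ℕ) = ∑ z ∈ u.image (Subtype.val), F n z := by
      rw [Finset.sum_image (fun a _ b _ h => Subtype.ext h)]
    rw [this]
    exact hFsum n _
  have hsummable : ∀ n, Summable (fun x : Γ n => F n (x : Fin d → ℕ)) := by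
    intro n
    exact summable_of_sum_le (fun x => (hFpos n _).le) (hsubsum n)
  have hZle : ∀ n, Z n ≤ 1 := by
    intro n
    rw [hZ n]
    exact Summable.tsum_le_of_sum_le (hsummable n) (hsubsum n)
  refine ⟨hZle, ?_⟩
  rintro ⟨y, hyΓ, hy⟩
  -- lower bound term
  set T : ℕ → ℝ := fun n => F n (y n) with hT
  have hTpos : ∀ n, 0 < T n := fun n => hFpos n (y n)
  have hTZ : ∀ n, T n ≤ Z n := by
    intro n
    rw [hZ n]
    exact Summable.le_tsum (hsummable n) ⟨y n, hyΓ n⟩ (fun j _ => (hFpos n _).le)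
  have hZpos : ∀ n, 0 < Z n := fun n => lt_of_lt_of_le (hTpos n) (hTZ n)
  -- the lower bound sequence tends to 0
  have hVinv : Tendsto (fun n => 1 / V n) atTop (nhds 0) := by
    simpa only [one_div, Pi.inv_def] using hV.inv_tendsto_atTop
  have hmain : Tendsto (fun n => (1 / V n) * Real.log (T n)) atTop (nhds 0) := by
    -- split the log of the product into a sum
    have hsplit : (fun n => (1 / V n) * Real.log (T n))
        = fun n => ∑ i, (1 / V n) *
            Real.log (Real.exp (-(V n * c i)) * (V n * c i) ^ (y n i) /
              (Nat.factorial (y n i) : ℝ)) := by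
      funext n
      rw [hT, hF]
      rw [Real.log_prod (fun i _ => by
        have := hlam n i
        have hfac : (0:ℝ) < (Nat.factorial (y n i) : ℝ) := by
          exact_mod_cast (y n i).factorial_pos
        positivity)]
      rw [Finset.mul_sum]
    rw [hsplit]
    have hzero : (0 : ℝ) = ∑ _i : Fin d, (0:ℝ) := by simp
    rw [hzero]
    apply tendsto_finset_sum
    intro i _
    -- per-coordinate limit
    have ha : Tendsto (fun n => (y n i : ℝ) / V n) atTop (nhds (c i)) := hy i
    -- eventually y n i > 0
    have hev : ∀ᶠ n in atTop, 0 < (y n i : ℝ) := by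
      filter_upwards [ha.eventually_const_lt (hc i)] with n hn
      rcases div_pos_iff.mp hn with ⟨h, _⟩ | ⟨_, h⟩
      · exact h
      · linarith [hVpos n]
    -- y n i → ∞ (as reals, hence as naturals)
    have hyatTop : Tendsto (fun n => (y n i : ℝ)) atTop atTop := by
      have h1 : Tendsto (fun n => ((y n i : ℝ) / V n) * V n) atTop atTop :=
        Filter.Tendsto.pos_mul_atTop (hc i) ha hV
      refine h1.congr fun n => ?_
      exact div_mul_cancel₀ _ (hVpos n).ne'
    have hyatTopNat : Tendsto (fun n => y n i) atTop atTop :=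
      tendsto_natCast_atTop_iff.mp hyatTop
    -- limit of the stirling part
    have hsqrtpi : Real.sqrt Real.pi ≠ 0 := (Real.sqrt_pos.mpr Real.pi_pos).ne'
    have hslog : Tendsto (fun n => Real.log (Stirling.stirlingSeq (y n i))) atTop
        (nhds (Real.log (Real.sqrt Real.pi))) :=
      (Stirling.tendsto_stirlingSeq_sqrt_pi.comp hyatTopNat).log hsqrtpi
    have h3 : Tendsto (fun n => (1 / V n) * Real.log (Stirling.stirlingSeq (y n i)))
        atTop (nhds 0) := by
      have := hVinv.mul hslog
      simpa using this
    -- limit of the log(2y)/V part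
    have h2yatTop : Tendsto (fun n => 2 * (y n i : ℝ)) atTop atTop :=
      Tendsto.const_mul_atTop two_pos hyatTop
    have t1 : Tendsto (fun n => Real.log (2 * (y n i : ℝ)) / (2 * (y n i : ℝ)))
        atTop (nhds 0) :=
      (Real.isLittleO_log_id_atTop.tendsto_div_nhds_zero).comp h2yatTop
    have t2 : Tendsto (fun n => (2 * (y n i : ℝ)) / V n) atTop (nhds (2 * c i)) := by
      have := (tendsto_const_nhds (x := (2:ℝ))).mul ha
      refine this.congr fun n => ?_
      rw [mul_div_assoc]
    have t3 : Tendsto (fun n => Real.log (2 * (y n i : ℝ)) / V n) atTop (nhds 0) := by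
      have := t1.mul t2
      rw [zero_mul] at this
      refine this.congr' ?_
      filter_upwards [hev] with n hn
      have h2y : (2 * (y n i : ℝ)) ≠ 0 := by positivity
      field_simp
    have h4 : Tendsto (fun n => Real.log (2 * (y n i : ℝ)) / V n / 2) atTop (nhds 0) := by
      have := t3.div_const 2
      simpa using this
    -- the a log a part
    have h2 : Tendsto (fun n => ((y n i : ℝ) / V n) * Real.log ((y n i : ℝ) / V n))
        atTop (nhds (c i * Real.log (c i))) :=
      ha.mul (ha.log (hc i).ne')
    -- assemble the limit of the simplified expression
    have hfinal : Tendsto (fun n =>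
        -c i + (y n i : ℝ) / V n + ((y n i : ℝ) / V n) * Real.log (c i)
          - ((y n i : ℝ) / V n) * Real.log ((y n i : ℝ) / V n)
          - (1 / V n) * Real.log (Stirling.stirlingSeq (y n i))
          - Real.log (2 * (y n i : ℝ)) / V n / 2) atTop (nhds 0) := by
      have := ((((tendsto_const_nhds (x := (-c i))).add ha).add
        (ha.mul (tendsto_const_nhds (x := Real.log (c i))))).sub h2).sub h3 |>.sub h4
      have heq : -c i + c i + c i * Real.log (c i) - c i * Real.log (c i) - 0 - 0 = 0 := by
        ring
      rwa [heq] at this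
    -- conclude via eventual equality
    refine hfinal.congr' ?_
    filter_upwards [hev] with n hy0
    have hVn := hVpos n
    have hci := hc i
    have hlamn := hlam n i
    have hfac : (0:ℝ) < (Nat.factorial (y n i) : ℝ) := by
      exact_mod_cast (y n i).factorial_pos
    have e1 : Real.log (Real.exp (-(V n * c i)) * (V n * c i) ^ (y n i) /
        (Nat.factorial (y n i) : ℝ))
        = -(V n * c i) + (y n i : ℝ) * Real.log (V n * c i)
          - Real.log ((Nat.factorial (y n i) : ℝ)) := by
      rw [Real.log_div (by positivity) hfac.ne', Real.log_mul (Real.exp_ne_zero _)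
        (by positivity), Real.log_exp, Real.log_pow]
    have e2 : Real.log ((Nat.factorial (y n i) : ℝ))
        = Real.log (Stirling.stirlingSeq (y n i)) + 1 / 2 * Real.log (2 * (y n i : ℝ))
          + (y n i : ℝ) * Real.log ((y n i : ℝ) / Real.exp 1) := by
      have := Stirling.log_stirlingSeq_formula (y n i)
      linarith
    have e3 : Real.log ((y n i : ℝ) / Real.exp 1) = Real.log (y n i : ℝ) - 1 := by
      rw [Real.log_div hy0.ne' (Real.exp_ne_zero 1), Real.log_exp]
    have e4 : Real.log (V n * c i) = Real.log (V n) + Real.log (c i) :=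
      Real.log_mul hVn.ne' hci.ne'
    have e5 : Real.log ((y n i : ℝ) / V n) = Real.log (y n i : ℝ) - Real.log (V n) :=
      Real.log_div hy0.ne' hVn.ne'
    rw [e1, e2, e3, e4, e5]
    field_simp
    ring
  -- squeeze
  have hupper : ∀ n, (1 / V n) * Real.log (Z n) ≤ 0 := by
    intro n
    have h1 : Real.log (Z n) ≤ 0 := Real.log_nonpos (hZpos n).le (hZle n)
    have h2 : 0 ≤ 1 / V n := (one_div_pos.mpr (hVpos n)).le
    exact mul_nonpos_of_nonneg_of_nonpos h2 h1
  have hlower : ∀ n, (1 / V n) * Real.log (T n) ≤ (1 / V n) * Real.log (Z n) := by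
    intro n
    have h1 : Real.log (T n) ≤ Real.log (Z n) := Real.log_le_log (hTpos n) (hTZ n)
    have h2 : 0 ≤ 1 / V n := (one_div_pos.mpr (hVpos n)).le
    exact mul_le_mul_of_nonneg_left h1 h2
  exact tendsto_of_tendsto_of_tendsto_of_le_of_le hmain tendsto_const_nhds
    hlower hupper
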